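/- arXiv:1510.08422 — 2 statements merged into one kernel-verified Lean document; each statement's English description precedes it below -/
import Mathlib

section
/- Let $t^* \in \mathbb{R}$ and let $F : \{(r,t) : t^* \le t \le r\} \to [0,\infty)$ be continuous and satisfy, for some constants $C_0 > 0$ and $p$ with $1 < p < 1+\sqrt{2}$, both (i) $F(r,t) \ge C_0 r^{1-p}$ and (ii) $F(r,t) \ge \frac{1}{4(r-t)}\int_{t}^{r}\int_{t^*}^{t} (\alpha-\beta) F(\alpha,\beta)^p \, d\beta\, d\alpha$ for all $t^* \le t < r$, with $t^* > 0$. Then no such $F$ exists. -/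
set_option maxHeartbeats 1000000

open intervalIntegral

lemma aux_alg (rt E X Y c1 c2 : ℝ) (h1 : rt ≠ 0) (hc1 : c1 ≠ 0) (hc2 : c2 ≠ 0) :
    (1/(4*rt)) * ((E * (X/(c1*c2))) * (rt*Y)) = (E / (4 * c1 * c2)) * X * Y := by
  field_simp

lemma aux_rpow_succ (x c : ℝ) (hx : 0 ≤ x) (hc : 0 ≤ c) : x * x ^ c = x ^ (c+1) := by
  rcases eq_or_lt_of_le hx with h | h
  · rw [← h, Real.zero_rpow (by positivity : (0:ℝ) < c + 1).ne', zero_mul]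
  · rw [Real.rpow_add_one h.ne']; ring

lemma aux_integral_rpow_shift (u v c : ℝ) (hc : 0 ≤ c) :
    ∫ β in u..v, (β - u) ^ c = (v-u)^(c+1)/(c+1) := by
  have h1 : ∫ β in u..v, ((fun x : ℝ => x ^ c) (β - u)) = ∫ β in (u-u)..(v-u), β ^ c :=
    intervalIntegral.integral_comp_sub_right (fun x : ℝ => x ^ c) u
  rw [show (∫ β in u..v, (β - u) ^ c) = ∫ β in u..v, ((fun x : ℝ => x ^ c) (β - u)) from rfl,
    h1, sub_self, integral_rpow (Or.inl (by linarith)),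
    Real.zero_rpow (by positivity : (0:ℝ) < c + 1).ne', sub_zero]

lemma aux_beta (u v q : ℝ) (huv : u ≤ v) (hq : 0 ≤ q) :
    ∫ β in u..v, (v - β) * (β - u) ^ q = (v-u)^(q+2) / ((q+1)*(q+2)) := by
  have key : ∀ β : ℝ, u ≤ β → (v - β) * (β - u) ^ q = (v-u) * (β - u) ^ q - (β-u)^(q+1) := by
    intro β hβ
    rw [← aux_rpow_succ _ _ (by linarith) hq]; ring
  have hi1 : IntervalIntegrable (fun β => (v-u) * (β - u) ^ q) MeasureTheory.volume u v := by
    apply Continuous.intervalIntegrable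
    exact continuous_const.mul ((continuous_id.sub continuous_const).rpow_const (fun x => Or.inr hq))
  have hi2 : IntervalIntegrable (fun β => (β - u) ^ (q+1)) MeasureTheory.volume u v := by
    apply Continuous.intervalIntegrable
    exact (continuous_id.sub continuous_const).rpow_const (fun x => Or.inr (by linarith))
  have hcong : ∫ β in u..v, (v - β) * (β - u) ^ q
      = ∫ β in u..v, ((v-u) * (β - u) ^ q - (β-u)^(q+1)) := by
    apply intervalIntegral.integral_congr
    intro β hβ
    rw [Set.uIcc_of_le huv] at hβ
    exact key β hβ.1
  rw [hcong, intervalIntegral.integral_sub hi1 hi2, intervalIntegral.integral_const_mul,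
    aux_integral_rpow_shift u v q hq, aux_integral_rpow_shift u v (q+1) (by linarith)]
  have h2 : (v-u) * ((v-u)^(q+1)) = (v-u)^(q+2) := by
    rw [aux_rpow_succ (v-u) (q+1) (by linarith) (by linarith)]; ring_nf
  have h3 : q + 1 + 1 = q + 2 := by ring
  rw [h3, ← h2]
  have hq1 : q + 1 ≠ 0 := by positivity
  have hq2 : q + 2 ≠ 0 := by positivity
  field_simp
  ring

theorem stmt_11 (tstar C0 p : ℝ) (htstar : 0 < tstar) (hC0 : 0 < C0)
    (hp1 : 1 < p) (hp2 : p < 1 + Real.sqrt 2) (F : ℝ → ℝ → ℝ)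
    (hcont : ContinuousOn (fun z : ℝ × ℝ => F z.1 z.2)
      {z : ℝ × ℝ | tstar ≤ z.2 ∧ z.2 ≤ z.1})
    (hnonneg : ∀ r t, tstar ≤ t → t ≤ r → 0 ≤ F r t)
    (hlow : ∀ r t, tstar ≤ t → t < r → F r t ≥ C0 * r ^ (1 - p))
    (hint : ∀ r t, tstar ≤ t → t < r →
      F r t ≥ (1 / (4 * (r - t))) *
        ∫ α in t..r, ∫ β in tstar..t, (α - β) * F α β ^ p) :
    False := by
  have hp0 : 0 < p := by linarith
  have hpm : 0 < p - 1 := by linarith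
  -- extend F to a continuous nonnegative function on the plane
  have hs_closed : IsClosed {z : ℝ × ℝ | tstar ≤ z.2 ∧ z.2 ≤ z.1} :=
    (isClosed_le continuous_const continuous_snd).inter (isClosed_le continuous_snd continuous_fst)
  obtain ⟨G₀, hG₀⟩ := ContinuousMap.exists_restrict_eq (Y := ℝ) hs_closed ⟨_, hcont.restrict⟩
  set G : ℝ × ℝ → ℝ := fun z => max (G₀ z) 0 with hG_def
  have hGc : Continuous G := (map_continuous G₀).max continuous_const
  have hGnn : ∀ z, 0 ≤ G z := fun z => le_max_right _ _
  have hGF : ∀ α β : ℝ, tstar ≤ β → β ≤ α → G (α, β) = F α β := by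
    intro α β h1 h2
    have hz : ((α, β) : ℝ × ℝ) ∈ {z : ℝ × ℝ | tstar ≤ z.2 ∧ z.2 ≤ z.1} := ⟨h1, h2⟩
    have := DFunLike.congr_fun hG₀ ⟨(α, β), hz⟩
    simp only [ContinuousMap.restrict_apply, ContinuousMap.coe_mk] at this
    rw [hG_def]
    simp only [this]
    exact max_eq_left (hnonneg α β h1 h2)
  -- constants
  set A : ℕ → ℝ := fun k => 2 * ((p:ℝ)^k - 1) / (p - 1) with hA_def
  set B : ℕ → ℝ := fun k => (p - 1) * p ^ k with hB_def
  set Q : ℝ := 16 * p ^ 2 / (p - 1) ^ 2 with hQ_def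
  set T : ℝ := max (Real.log Q) (2 * Real.log p / (p - 1)) with hT_def
  set k₀ : ℝ := 2 / (p - 1) with hk0_def
  set S : ℝ := T * k₀ - Real.log C0 with hS_def
  set eps : ℕ → ℝ := fun k => Real.exp (T * (k + k₀) - S * p ^ k) with heps_def
  have hpk1 : ∀ k : ℕ, (1:ℝ) ≤ p ^ k := fun k => one_le_pow₀ hp1.le
  have hpk0 : ∀ k : ℕ, (0:ℝ) < p ^ k := fun k => lt_of_lt_of_le one_pos (hpk1 k)
  have hA0 : ∀ k, 0 ≤ A k := by
    intro k
    have := hpk1 k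
    rw [hA_def]
    simp only
    apply div_nonneg _ hpm.le
    linarith
  have hArec : ∀ k, p * A k + 2 = A (k+1) := by
    intro k
    rw [hA_def]
    simp only
    rw [pow_succ]
    field_simp
    ring
  have hBrec : ∀ k, p * B k = B (k+1) := by
    intro k; rw [hB_def]; simp only; rw [pow_succ]; ring
  have hB0 : ∀ k, 0 < B k := by intro k; rw [hB_def]; positivity
  have hQ1 : 1 < Q := by
    rw [hQ_def, lt_div_iff₀ (by positivity)]
    nlinarith
  have hQ0 : 0 < Q := lt_trans one_pos hQ1
  have hT0 : 0 < T := lt_of_lt_of_le (Real.log_pos hQ1) (le_max_left _ _)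
  have hTQ : Real.log Q ≤ T := le_max_left _ _
  have hTp : 2 * Real.log p ≤ T * (p - 1) := by
    rw [hT_def, ← div_le_iff₀ hpm]
    exact le_max_right _ _
  have hk0p : k₀ * (p - 1) = 2 := by rw [hk0_def]; field_simp
  have heps_pos : ∀ k, 0 < eps k := fun k => Real.exp_pos _
  have heps_step : ∀ k : ℕ, eps (k+1) * (4 * (p * A k + 1) * (p * A k + 2)) ≤ eps k ^ p := by
    intro k
    have hX0 : 0 ≤ p * A k := mul_nonneg hp0.le (hA0 k)
    have h1'' : (p - 1) * A (k+1) = 2 * (p^(k+1) - 1) := by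
      rw [hA_def]
      simp only
      field_simp
    have h1' : (p - 1) * (p * A k + 2) ≤ 2 * p * p ^ k := by
      rw [hArec k, h1'']
      have := pow_succ p k
      nlinarith [hpk0 (k+1)]
    have h2 : 4 * (p * A k + 1) * (p * A k + 2) ≤ Q * (p^k)^2 := by
      rw [hQ_def, div_mul_eq_mul_div, le_div_iff₀ (by positivity)]
      nlinarith [mul_le_mul h1' h1' (by positivity) (by positivity), hpk0 k]
    have h4 : Q * (p^k)^2 ≤ Real.exp (T * (1 + k * (p - 1))) := by
      rw [← Real.exp_log (by positivity : (0:ℝ) < Q * (p^k)^2)]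
      apply Real.exp_le_exp.mpr
      rw [Real.log_mul hQ0.ne' (by positivity), Real.log_pow, Real.log_pow]
      have hk0 : (0:ℝ) ≤ (k:ℝ) := Nat.cast_nonneg k
      have := mul_le_mul_of_nonneg_left hTp hk0
      push_cast
      nlinarith
    calc eps (k+1) * (4 * (p * A k + 1) * (p * A k + 2))
        ≤ eps (k+1) * Real.exp (T * (1 + k * (p - 1))) := by
          apply mul_le_mul_of_nonneg_left (le_trans h2 h4) (heps_pos _).le
      _ = Real.exp ((T * (k + k₀) - S * p ^ k) * p) := by
          rw [heps_def]
          simp only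
          rw [← Real.exp_add]
          congr 1
          push_cast
          rw [pow_succ, hk0_def]
          field_simp
          ring
      _ = eps k ^ p := by rw [Real.exp_mul]
  -- the main induction
  have main : ∀ k : ℕ, ∀ r t : ℝ, tstar ≤ t → t < r →
      eps k * (t - tstar) ^ (A k) * r ^ (-(B k)) ≤ F r t := by
    intro k
    induction k with
    | zero =>
      intro r t ht htr
      have hA0' : A 0 = 0 := by rw [hA_def]; norm_num
      have hB0' : -(B 0) = 1 - p := by rw [hB_def]; norm_num
      have heps0 : eps 0 = C0 := by
        rw [heps_def]
        simp only [Nat.cast_zero, zero_add, pow_zero, mul_one, hS_def]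
        rw [show T * k₀ - (T * k₀ - Real.log C0) = Real.log C0 by ring]
        exact Real.exp_log hC0
      rw [hA0', hB0', heps0, Real.rpow_zero, mul_one]
      exact hlow r t ht htr
    | succ k IH =>
      intro r t ht htr
      have ht0 : 0 < t := lt_of_lt_of_le htstar ht
      have hr0 : 0 < r := lt_trans ht0 htr
      set q : ℝ := p * A k with hq_def
      have hq0 : 0 ≤ q := mul_nonneg hp0.le (hA0 k)
      set K : ℝ := eps k ^ p * ((t - tstar)^(q+2) / ((q+1)*(q+2))) with hK_def
      have hK0 : 0 ≤ K := by
        rw [hK_def]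
        apply mul_nonneg (Real.rpow_nonneg (heps_pos k).le _)
        apply div_nonneg (Real.rpow_nonneg (by linarith [ht]) _) (by positivity)
      set g : ℝ → ℝ := fun α => ∫ β in tstar..t, (α - β) * G (α, β) ^ p with hg_def
      have hgc : Continuous g := by
        rw [hg_def]
        apply intervalIntegral.continuous_parametric_intervalIntegral_of_continuous'
        show Continuous fun z : ℝ × ℝ => (z.1 - z.2) * G (z.1, z.2) ^ p
        exact (continuous_fst.sub continuous_snd).mul
          ((hGc.comp (continuous_fst.prodMk continuous_snd)).rpow_const (fun z => Or.inr hp0.le))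
      have hFeqG : Set.EqOn (fun α => ∫ β in tstar..t, (α - β) * F α β ^ p) g (Set.uIcc t r) := by
        intro α hα
        rw [Set.uIcc_of_le htr.le] at hα
        rw [hg_def]
        apply intervalIntegral.integral_congr
        intro β hβ
        rw [Set.uIcc_of_le ht] at hβ
        simp only
        rw [hGF α β hβ.1 (le_trans hβ.2 hα.1)]
      have hint' : (1 / (4 * (r - t))) * (∫ α in t..r, g α) ≤ F r t := by
        have h := hint r t ht htr
        rwa [intervalIntegral.integral_congr hFeqG] at h
      -- inner bound
      have hinner : ∀ α : ℝ, t < α → K * α ^ (-(p * B k)) ≤ g α := by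
        intro α hα
        have hα0 : 0 < α := lt_trans ht0 hα
        set C : ℝ := eps k ^ p * α ^ (-(p * B k)) with hC_def
        have hpoint : ∀ β ∈ Set.Icc tstar t,
            C * ((t - β) * (β - tstar) ^ q) ≤ (α - β) * G (α, β) ^ p := by
          intro β hβ
          have hβα : β < α := lt_of_le_of_lt hβ.2 hα
          have hIH := IH α β hβ.1 hβα
          have hβt : 0 ≤ β - tstar := sub_nonneg.mpr hβ.1
          have hbnn : 0 ≤ eps k * (β - tstar) ^ (A k) * α ^ (-(B k)) :=
            mul_nonneg (mul_nonneg (heps_pos k).le (Real.rpow_nonneg hβt _))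
              (Real.rpow_nonneg hα0.le _)
          have hrp := Real.rpow_le_rpow hbnn hIH hp0.le
          have hexp : (eps k * (β - tstar) ^ (A k) * α ^ (-(B k))) ^ p
              = eps k ^ p * (β - tstar) ^ q * α ^ (-(p * B k)) := by
            rw [Real.mul_rpow (mul_nonneg (heps_pos k).le (Real.rpow_nonneg hβt _))
                (Real.rpow_nonneg hα0.le _),
              Real.mul_rpow (heps_pos k).le (Real.rpow_nonneg hβt _),
              ← Real.rpow_mul hβt, ← Real.rpow_mul hα0.le, hq_def]
            ring_nf
          rw [hexp] at hrp
          have hE0 : 0 ≤ eps k ^ p * (β - tstar) ^ q * α ^ (-(p * B k)) :=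
            mul_nonneg (mul_nonneg (Real.rpow_nonneg (heps_pos k).le _)
              (Real.rpow_nonneg hβt _)) (Real.rpow_nonneg hα0.le _)
          have h5 : C * ((t - β) * (β - tstar) ^ q)
              = (t - β) * (eps k ^ p * (β - tstar) ^ q * α ^ (-(p * B k))) := by
            rw [hC_def]; ring
          rw [h5, hGF α β hβ.1 hβα.le]
          exact mul_le_mul (by linarith [hβ.2]) hrp hE0 (by linarith [hβ.2])
        have hi1 : IntervalIntegrable (fun β => C * ((t - β) * (β - tstar) ^ q))
            MeasureTheory.volume tstar t := by
          apply Continuous.intervalIntegrable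
          exact continuous_const.mul ((continuous_const.sub continuous_id).mul
            ((continuous_id.sub continuous_const).rpow_const (fun x => Or.inr hq0)))
        have hi2 : IntervalIntegrable (fun β => (α - β) * G (α, β) ^ p)
            MeasureTheory.volume tstar t := by
          apply Continuous.intervalIntegrable
          exact (continuous_const.sub continuous_id).mul
            ((hGc.comp (continuous_const.prodMk continuous_id)).rpow_const (fun x => Or.inr hp0.le))
        have hmono := intervalIntegral.integral_mono_on ht hi1 hi2 hpoint
        rw [intervalIntegral.integral_const_mul, aux_beta tstar t q ht hq0] at hmono
        calc K * α ^ (-(p * B k)) = C * ((t - tstar)^(q+2) / ((q+1)*(q+2))) := by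
              rw [hK_def, hC_def]; ring
          _ ≤ g α := hmono
      -- outer bound
      have he_nonpos : -(p * B k) ≤ 0 := neg_nonpos.mpr (mul_nonneg hp0.le (hB0 k).le)
      have hpow_cont : ContinuousOn (fun α : ℝ => α ^ (-(p * B k))) (Set.uIcc t r) := by
        apply ContinuousOn.rpow_const continuousOn_id
        intro x hx
        rw [Set.uIcc_of_le htr.le] at hx
        exact Or.inl (ne_of_gt (lt_of_lt_of_le ht0 hx.1))
      have hpow_int : IntervalIntegrable (fun α => K * α ^ (-(p * B k)))
          MeasureTheory.volume t r :=
        (continuousOn_const.mul hpow_cont).intervalIntegrable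
      have hg_int : IntervalIntegrable g MeasureTheory.volume t r := hgc.intervalIntegrable t r
      have hae : (fun α => K * α ^ (-(p * B k)))
          ≤ᵐ[MeasureTheory.volume.restrict (Set.Icc t r)] g := by
        have hne : ∀ᵐ α ∂(MeasureTheory.volume.restrict (Set.Icc t r)), α ≠ t := by
          apply MeasureTheory.ae_restrict_of_ae
          rw [MeasureTheory.ae_iff]
          have : {a : ℝ | ¬ a ≠ t} = {t} := by ext a; simp
          rw [this]
          exact Real.volume_singleton
        filter_upwards [hne, MeasureTheory.ae_restrict_mem measurableSet_Icc] with α h1 h2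
        exact hinner α (lt_of_le_of_ne h2.1 (Ne.symm h1))
      have houter := intervalIntegral.integral_mono_ae_restrict htr.le hpow_int hg_int hae
      rw [intervalIntegral.integral_const_mul] at houter
      -- lower bound the power integral
      have hconst_int : IntervalIntegrable (fun _ : ℝ => r ^ (-(p * B k)))
          MeasureTheory.volume t r := intervalIntegrable_const
      have hpow_int2 : IntervalIntegrable (fun α : ℝ => α ^ (-(p * B k)))
          MeasureTheory.volume t r := hpow_cont.intervalIntegrable
      have h6 := intervalIntegral.integral_mono_on htr.le hconst_int hpow_int2
        (fun x hx => Real.rpow_le_rpow_of_nonpos (lt_of_lt_of_le ht0 hx.1) hx.2 he_nonpos)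
      rw [intervalIntegral.integral_const, smul_eq_mul] at h6
      -- assemble
      have hrt : 0 < r - t := sub_pos.mpr htr
      have hgoal1 : eps (k+1) * (t - tstar) ^ (A (k+1)) * r ^ (-(B (k+1)))
          ≤ (1 / (4 * (r - t))) * (K * ((r - t) * r ^ (-(p * B k)))) := by
        have hq1 : (0:ℝ) < q + 1 := by linarith
        have hq2 : (0:ℝ) < q + 2 := by linarith
        have hrnn : 0 ≤ r ^ (-(p * B k)) := Real.rpow_nonneg hr0.le _
        have htsnn : 0 ≤ (t - tstar) ^ (q + 2) := Real.rpow_nonneg (by linarith [ht]) _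
        have hD0 : (0:ℝ) < 4 * (q + 1) * (q + 2) := by positivity
        have h7 : eps (k+1) ≤ eps k ^ p / (4 * (q + 1) * (q + 2)) := by
          rw [le_div_iff₀ hD0]
          exact heps_step k
        have heq : (1 / (4 * (r - t))) * (K * ((r - t) * r ^ (-(p * B k))))
            = (eps k ^ p / (4 * (q + 1) * (q + 2))) * (t - tstar) ^ (q + 2) * r ^ (-(p * B k)) := by
          rw [hK_def]
          exact aux_alg (r - t) (eps k ^ p) ((t - tstar) ^ (q+2)) (r ^ (-(p * B k)))
            (q+1) (q+2) hrt.ne' hq1.ne' hq2.ne'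
        rw [heq, ← hArec k, ← hq_def, ← hBrec k]
        apply mul_le_mul_of_nonneg_right _ hrnn
        exact mul_le_mul_of_nonneg_right h7 htsnn
      calc eps (k+1) * (t - tstar) ^ (A (k+1)) * r ^ (-(B (k+1)))
          ≤ (1 / (4 * (r - t))) * (K * ((r - t) * r ^ (-(p * B k)))) := hgoal1
        _ ≤ (1 / (4 * (r - t))) * (K * ∫ α in t..r, α ^ (-(p * B k))) := by
            apply mul_le_mul_of_nonneg_left _ (by positivity)
            exact mul_le_mul_of_nonneg_left h6 hK0
        _ ≤ (1 / (4 * (r - t))) * (∫ α in t..r, g α) := by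
            apply mul_le_mul_of_nonneg_left houter (by positivity)
        _ ≤ F r t := hint'
  -- final contradiction
  have hd2 : (p - 1)^2 < 2 :=
    (Real.lt_sqrt (by linarith : (0:ℝ) ≤ p - 1)).mp (by linarith : p - 1 < Real.sqrt 2)
  set d : ℝ := 2/(p-1) - (p-1) with hd_def
  have hd0 : 0 < d := by
    rw [hd_def, sub_pos, lt_div_iff₀ hpm, ← pow_two]
    exact hd2
  set r0 : ℝ := max (max (4*tstar) 4) (Real.exp ((1 + S + (2/(p-1))*Real.log 4)/d)) with hr0_def
  have hr04 : 4 ≤ r0 := le_trans (le_max_right _ _) (le_max_left _ _)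
  have hr0t : 4*tstar ≤ r0 := le_trans (le_max_left _ _) (le_max_left _ _)
  have hr0pos : 0 < r0 := by linarith
  have hlogr0 : 1 + S + (2/(p-1))*Real.log 4 ≤ d * Real.log r0 := by
    have h := (Real.le_log_iff_exp_le hr0pos).mpr (le_max_right _ _)
    calc 1 + S + (2/(p-1))*Real.log 4 = d * ((1 + S + (2/(p-1))*Real.log 4)/d) := by
          rw [mul_div_cancel₀ _ hd0.ne']
      _ ≤ d * Real.log r0 := mul_le_mul_of_nonneg_left h hd0.le
  set t0 : ℝ := r0/2 with ht0_def
  have ht0star : tstar ≤ t0 := by rw [ht0_def]; linarith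
  have ht0r : t0 < r0 := by rw [ht0_def]; linarith
  have hq14 : (1:ℝ) ≤ r0/4 := by linarith
  have hlog4 : 0 ≤ Real.log (r0/4) := Real.log_nonneg hq14
  have hts4 : r0/4 ≤ t0 - tstar := by rw [ht0_def]; linarith
  set c0 : ℝ := T*k₀ - (2/(p-1))*Real.log (r0/4) with hc0_def
  have key : ∀ k : ℕ, Real.exp (p^k + c0) ≤ F r0 t0 := by
    intro k
    have h1 := main k r0 t0 ht0star ht0r
    have h2 : (r0/4) ^ (A k) ≤ (t0 - tstar) ^ (A k) :=
      Real.rpow_le_rpow (by linarith) hts4 (hA0 k)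
    have h3 : eps k * (r0/4)^(A k) * r0^(-(B k)) ≤ F r0 t0 := by
      refine le_trans ?_ h1
      apply mul_le_mul_of_nonneg_right _ (Real.rpow_nonneg hr0pos.le _)
      exact mul_le_mul_of_nonneg_left h2 (heps_pos k).le
    have h4 : eps k * (r0/4)^(A k) * r0^(-(B k))
        = Real.exp ((T * (k + k₀) - S * p ^ k) + Real.log (r0/4) * A k + Real.log r0 * (-(B k))) := by
      rw [heps_def]
      simp only
      rw [Real.rpow_def_of_pos (by linarith : (0:ℝ) < r0/4),
        Real.rpow_def_of_pos hr0pos, ← Real.exp_add, ← Real.exp_add]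
    have h5 : p^k + c0 ≤ (T * (k + k₀) - S * p ^ k) + Real.log (r0/4) * A k + Real.log r0 * (-(B k)) := by
      have hAk : A k = (2/(p-1)) * p^k - 2/(p-1) := by
        rw [hA_def]
        field_simp
      have hBk : B k = (p-1) * p^k := by rw [hB_def]
      have hlogdiv : Real.log (r0/4) = Real.log r0 - Real.log 4 :=
        Real.log_div hr0pos.ne' (by norm_num)
      have hcoef : 1 ≤ -S + (2/(p-1)) * Real.log (r0/4) - (p-1) * Real.log r0 := by
        rw [hlogdiv]
        rw [hd_def] at hlogr0
        have hexp2 : (2/(p-1) - (p-1)) * Real.log r0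
            = (2/(p-1)) * Real.log r0 - (p-1) * Real.log r0 := by ring
        rw [hexp2] at hlogr0
        have hexp3 : (2/(p-1)) * (Real.log r0 - Real.log 4)
            = (2/(p-1)) * Real.log r0 - (2/(p-1)) * Real.log 4 := by ring
        rw [hexp3]
        linarith [hlogr0]
      have hTk : 0 ≤ T * k := mul_nonneg hT0.le (Nat.cast_nonneg k)
      have hpk := hpk0 k
      have hexpand : (T * (k + k₀) - S * p ^ k) + Real.log (r0/4) * A k + Real.log r0 * (-(B k))
          = p^k * (-S + (2/(p-1)) * Real.log (r0/4) - (p-1) * Real.log r0) + T*k + c0 := by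
        rw [hAk, hBk, hc0_def]
        ring
      rw [hexpand]
      have h8 := mul_le_mul_of_nonneg_left hcoef hpk.le
      rw [mul_one] at h8
      linarith [h8, hTk]
    calc Real.exp (p^k + c0) ≤ Real.exp ((T * (k + k₀) - S * p ^ k) + Real.log (r0/4) * A k + Real.log r0 * (-(B k))) := Real.exp_le_exp.mpr h5
      _ = eps k * (r0/4)^(A k) * r0^(-(B k)) := h4.symm
      _ ≤ F r0 t0 := h3
  have hFpos : 0 < F r0 t0 := lt_of_lt_of_le (Real.exp_pos _) (key 0)
  have hub : ∀ k : ℕ, p^k + c0 ≤ Real.log (F r0 t0) :=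
    fun k => (Real.le_log_iff_exp_le hFpos).mpr (key k)
  obtain ⟨n, hn⟩ := pow_unbounded_of_one_lt (Real.log (F r0 t0) - c0) hp1
  linarith [hub n, hn]
end

section
/- Let $t^* > 0$, $1 < p < 1+\sqrt{2}$, $C_0 > 0$, and let $\bar u$ be a continuous nonnegative function on $\Sigma = \{(r,t): 0 \le r \le t - t^*\}$ satisfying $\bar u(r,t) \ge C_0 (t+r)^{1-p}$ and $\bar u(r,t) \ge \iint_{B_{r,t}} \frac{\lambda}{2r} \bar u(\lambda,s)^p \, d\lambda\, ds$ for all $(r,t) \in \Sigma$ with $r > 0$, where $B_{r,t} = \{(\lambda,s) : t-r \le \lambda+s \le t+r,\ t^* \le s-\lambda \le t-r\}$. Then no such function $\bar u$ exists. -/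
open MeasureTheory Set

noncomputable def covMap : ℝ × ℝ →L[ℝ] ℝ × ℝ :=
  LinearMap.toContinuousLinearMap (Matrix.toLin (Module.Basis.finTwoProd ℝ) (Module.Basis.finTwoProd ℝ)
    !![(1:ℝ)/2, -(1/2); 1/2, 1/2])

lemma covMap_apply (q : ℝ × ℝ) : covMap q = ((q.1 - q.2)/2, (q.1 + q.2)/2) := by
  rw [covMap, Matrix.toLin_finTwoProd_toContinuousLinearMap]
  simp [ContinuousLinearMap.prod_apply]
  constructor <;> ring

lemma covMap_det : covMap.det = 1/2 := by
  rw [covMap]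
  simp only [ContinuousLinearMap.det, LinearMap.det_toContinuousLinearMap,
    LinearMap.coe_toContinuousLinearMap, LinearMap.det_toLin, Matrix.det_fin_two_of]
  norm_num

lemma covMap_inj : Function.Injective covMap := by
  intro a b h
  rw [covMap_apply, covMap_apply, Prod.ext_iff] at h
  obtain ⟨h1, h2⟩ := h
  have : a.1 = b.1 := by linarith [h1, h2]
  have : a.2 = b.2 := by linarith [h1, h2]
  exact Prod.ext ‹a.1 = b.1› ‹a.2 = b.2›

lemma cov_image (u v w : ℝ) :
    covMap '' (Icc v u ×ˢ Icc w v) =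
    {z : ℝ × ℝ | v ≤ z.1 + z.2 ∧ z.1 + z.2 ≤ u ∧ w ≤ z.2 - z.1 ∧ z.2 - z.1 ≤ v} := by
  ext z
  constructor
  · rintro ⟨q, ⟨⟨h1, h2⟩, h3, h4⟩, rfl⟩
    rw [covMap_apply]
    refine ⟨by simp; linarith, by simp; linarith, by simp; linarith, by simp; linarith⟩
  · rintro ⟨h1, h2, h3, h4⟩
    refine ⟨(z.1 + z.2, z.2 - z.1), ⟨⟨h1, h2⟩, h3, h4⟩, ?_⟩
    rw [covMap_apply]
    obtain ⟨z1, z2⟩ := z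
    simp only [Prod.mk.injEq]
    constructor <;> ring

lemma cov_integral (u v w : ℝ) (g : ℝ × ℝ → ℝ) :
    (∫ z in {z : ℝ × ℝ | v ≤ z.1 + z.2 ∧ z.1 + z.2 ≤ u ∧ w ≤ z.2 - z.1 ∧ z.2 - z.1 ≤ v}, g z)
    = (1/2) * ∫ q in Icc v u ×ˢ Icc w v, g ((q.1 - q.2)/2, (q.1 + q.2)/2) := by
  rw [← cov_image u v w]
  have hs : MeasurableSet (Icc v u ×ˢ Icc w v : Set (ℝ × ℝ)) :=
    (measurableSet_Icc.prod measurableSet_Icc)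
  rw [integral_image_eq_integral_abs_det_fderiv_smul volume hs
      (fun x _ => covMap.hasFDerivAt.hasFDerivWithinAt) covMap_inj.injOn g]
  simp only [covMap_det, covMap_apply, smul_eq_mul]
  rw [← integral_const_mul]
  congr 1
  ext q
  rw [abs_of_pos (by norm_num : (0:ℝ) < 1/2)]

lemma slice_integral (w v m : ℝ) (hwv : w < v) (hm : 0 ≤ m) :
    ∫ β in Icc w v, (v - β) * (β - w) ^ m
      = (v - w) ^ (m + 2) / ((m + 1) * (m + 2)) := by
  have hA : (0:ℝ) < v - w := by linarith
  rw [MeasureTheory.integral_Icc_eq_integral_Ioc,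
    ← intervalIntegral.integral_of_le hwv.le]
  have h1 : ∫ β in w..v, (v - β) * (β - w) ^ m
      = ∫ γ in (0:ℝ)..(v - w), (v - w - γ) * γ ^ m := by
    calc ∫ β in w..v, (v - β) * (β - w) ^ m
        = ∫ β in w..v, (fun γ => (v - w - γ) * γ ^ m) (β - w) := by
          apply intervalIntegral.integral_congr
          intro x _
          simp only []
          ring_nf
      _ = ∫ γ in (0:ℝ)..(v - w), (v - w - γ) * γ ^ m := by
          have := intervalIntegral.integral_comp_sub_right
            (a := w) (b := v) (fun γ => (v - w - γ) * γ ^ m) w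
          simpa using this
  rw [h1]
  have h2 : ∀ γ ∈ uIcc (0:ℝ) (v - w), (v - w - γ) * γ ^ m
      = (v - w) * γ ^ m - γ ^ (m + 1) := by
    intro γ hγ
    rcases eq_or_ne γ 0 with rfl | hγ0
    · rw [Real.zero_rpow (by linarith : m + 1 ≠ 0)]; ring
    · rw [Real.rpow_add_one hγ0]; ring
  rw [intervalIntegral.integral_congr h2,
    intervalIntegral.integral_sub
      ((intervalIntegral.intervalIntegrable_rpow' (by linarith)).const_mul _)
      (intervalIntegral.intervalIntegrable_rpow' (by linarith)),
    intervalIntegral.integral_const_mul,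
    integral_rpow (Or.inl (by linarith)),
    integral_rpow (Or.inl (by linarith)),
    Real.zero_rpow (by linarith : m + 1 ≠ 0),
    Real.zero_rpow (by linarith : m + 1 + 1 ≠ 0)]
  rw [show m + 1 + 1 = m + 2 by ring]
  rw [show (v-w) * (((v-w)^(m+1) - 0)/(m+1)) = (v-w)^(m+1) * (v-w) / (m+1) by ring,
    ← Real.rpow_add_one (by linarith : v - w ≠ 0)]
  rw [show m + 1 + 1 = m + 2 by ring]
  field_simp
  ring

lemma phi_integral (u v w m K : ℝ) (hwv : w < v) (hvu : v < u) (hm : 0 ≤ m) :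
    (∫ z in {z : ℝ × ℝ | v ≤ z.1 + z.2 ∧ z.1 + z.2 ≤ u ∧ w ≤ z.2 - z.1 ∧ z.2 - z.1 ≤ v},
      K * ((v - (z.2 - z.1)) * ((z.2 - z.1) - w) ^ m))
    = K * ((u - v) / 2 * ((v - w) ^ (m + 2) / ((m + 1) * (m + 2)))) := by
  rw [cov_integral u v w]
  have : ∀ q : ℝ × ℝ,
      K * ((v - (((q.1 + q.2)/2) - ((q.1 - q.2)/2))) * ((((q.1 + q.2)/2) - ((q.1 - q.2)/2)) - w) ^ m)
      = (fun x : ℝ => (1:ℝ)) q.1 * ((fun β => K * ((v - β) * (β - w) ^ m)) q.2) := by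
    intro q
    have hq : (q.1 + q.2)/2 - (q.1 - q.2)/2 = q.2 := by ring
    rw [hq]
    simp
  calc (1/2) * ∫ q in Icc v u ×ˢ Icc w v,
        K * ((v - (((q.1 - q.2)/2, (q.1 + q.2)/2).2 - ((q.1 - q.2)/2, (q.1 + q.2)/2).1))
          * ((((q.1 - q.2)/2, (q.1 + q.2)/2).2 - ((q.1 - q.2)/2, (q.1 + q.2)/2).1) - w) ^ m)
      = (1/2) * ∫ q in Icc v u ×ˢ Icc w v,
          (fun x : ℝ => (1:ℝ)) q.1 * ((fun β => K * ((v - β) * (β - w) ^ m)) q.2) := by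
        congr 1
        apply setIntegral_congr_fun (measurableSet_Icc.prod measurableSet_Icc)
        intro q _
        exact this q
    _ = (1/2) * (((∫ x in Icc v u, (1:ℝ)) * ∫ β in Icc w v, K * ((v - β) * (β - w) ^ m))) := by
        rw [Measure.volume_eq_prod]
        exact congrArg (fun x => 1/2 * x)
          (setIntegral_prod_mul (fun _ : ℝ => (1:ℝ))
            (fun β => K * ((v - β) * (β - w) ^ m)) (Icc v u) (Icc w v))
    _ = K * ((u - v) / 2 * ((v - w) ^ (m + 2) / ((m + 1) * (m + 2)))) := by
        rw [setIntegral_const, integral_const_mul, slice_integral w v m hwv hm]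
        simp [Real.volume_Icc, ENNReal.toReal_ofReal (by linarith : (0:ℝ) ≤ u - v),
          max_eq_left (by linarith : (0:ℝ) ≤ u - v)]
        ring

noncomputable def bseq (p : ℝ) : ℕ → ℝ := fun k => 2 * (p ^ k - 1) / (p - 1)

noncomputable def Dseq (p C0 : ℝ) : ℕ → ℝ := fun k =>
  Nat.rec C0 (fun k Dk => Dk ^ p / (4 * (p * bseq p k + 1) * (p * bseq p k + 2))) k

lemma Dseq_zero (p C0 : ℝ) : Dseq p C0 0 = C0 := rfl

lemma Dseq_succ (p C0 : ℝ) (k : ℕ) :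
    Dseq p C0 (k + 1) = Dseq p C0 k ^ p / (4 * (p * bseq p k + 1) * (p * bseq p k + 2)) := rfl

lemma bseq_nonneg {p : ℝ} (hp : 1 < p) (k : ℕ) : 0 ≤ bseq p k := by
  have h1 : (1:ℝ) ≤ p ^ k := one_le_pow₀ hp.le
  have : 0 < p - 1 := by linarith
  unfold bseq
  have h2 : (0:ℝ) ≤ 2 * (p ^ k - 1) := by linarith
  positivity

lemma bseq_succ {p : ℝ} (hp : 1 < p) (k : ℕ) : bseq p (k + 1) = p * bseq p k + 2 := by
  have hne : p - 1 ≠ 0 := by intro h; nlinarith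
  unfold bseq
  field_simp
  ring

lemma Dseq_pos {p C0 : ℝ} (hp : 1 < p) (hC0 : 0 < C0) (k : ℕ) : 0 < Dseq p C0 k := by
  induction k with
  | zero => exact hC0
  | succ k ih =>
    have hb := bseq_nonneg hp k
    have hbp : 0 ≤ p * bseq p k := by positivity
    rw [Dseq_succ]
    have h1 : (0:ℝ) < Dseq p C0 k ^ p := Real.rpow_pos_of_pos ih p
    have h2 : (0:ℝ) < 4 * (p * bseq p k + 1) * (p * bseq p k + 2) :=
      mul_pos (mul_pos (by norm_num) (by linarith)) (by linarith)
    positivity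

set_option maxHeartbeats 2000000 in
theorem stmt_14 (tstar C0 p : ℝ) (htstar : 0 < tstar) (hC0 : 0 < C0)
    (hp1 : 1 < p) (hp2 : p < 1 + Real.sqrt 2) (ubar : ℝ → ℝ → ℝ)
    (hcont : ContinuousOn (fun z : ℝ × ℝ => ubar z.1 z.2)
      {z : ℝ × ℝ | 0 ≤ z.1 ∧ z.1 ≤ z.2 - tstar})
    (hnonneg : ∀ r t, 0 ≤ r → r ≤ t - tstar → 0 ≤ ubar r t)
    (hlow : ∀ r t, 0 < r → r ≤ t - tstar → ubar r t ≥ C0 * (t + r) ^ (1 - p))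
    (hint : ∀ r t, 0 < r → r ≤ t - tstar →
      ubar r t ≥ ∫ z in {z : ℝ × ℝ | t - r ≤ z.1 + z.2 ∧ z.1 + z.2 ≤ t + r ∧
          tstar ≤ z.2 - z.1 ∧ z.2 - z.1 ≤ t - r},
        z.1 / (2 * r) * ubar z.1 z.2 ^ p) :
    False := by
  have hp0 : (0:ℝ) < p := by linarith
  have hpm1 : (0:ℝ) < p - 1 := by linarith
  -- the key iteration
  have key : ∀ k : ℕ, ∀ u v : ℝ, tstar ≤ v → v < u →
      Dseq p C0 k * u ^ (-((p - 1) * p ^ k)) * (v - tstar) ^ (bseq p k)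
        ≤ ubar ((u - v)/2) ((u + v)/2) := by
    intro k
    induction k with
    | zero =>
      intro u v hv hvu
      have h0 : bseq p 0 = 0 := by unfold bseq; norm_num
      have h1 : -((p - 1) * p ^ (0:ℕ)) = 1 - p := by norm_num
      rw [h0, h1, Real.rpow_zero, mul_one]
      have := hlow ((u - v)/2) ((u + v)/2) (by linarith) (by linarith)
      have harg : (u + v)/2 + (u - v)/2 = u := by ring
      rw [harg] at this
      simpa [Dseq] using this
    | succ k ih =>
      intro u v hv hvu
      rcases eq_or_lt_of_le hv with rfl | hv'
      · -- v = tstar : RHS power is 0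
        have hb2 : (0:ℝ) < bseq p (k+1) := by
          rw [bseq_succ hp1]
          have h := mul_nonneg hp0.le (bseq_nonneg hp1 k)
          linarith
        rw [sub_self, Real.zero_rpow (ne_of_gt hb2), mul_zero]
        exact hnonneg _ _ (by linarith) (by linarith)
      · -- main case
        set r : ℝ := (u - v)/2 with hr_def
        set t : ℝ := (u + v)/2 with ht_def
        have hr : 0 < r := by simp only [hr_def]; linarith
        have hrt : r ≤ t - tstar := by simp only [hr_def, ht_def]; linarith
        have htr1 : t - r = v := by simp only [hr_def, ht_def]; ring
        have htr2 : t + r = u := by simp only [hr_def, ht_def]; ring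
        have h2r : 2 * r = u - v := by simp only [hr_def]; ring
        have hu0 : (0:ℝ) < u := by linarith
        have hv0 : (0:ℝ) < v := by linarith
        -- notation
        set a : ℝ := (p - 1) * p ^ k with ha_def
        set b : ℝ := bseq p k with hb_def
        set m : ℝ := p * bseq p k with hm_def
        set D : ℝ := Dseq p C0 k with hD_def
        have hD0 : 0 < D := Dseq_pos hp1 hC0 k
        have hb0 : 0 ≤ b := bseq_nonneg hp1 k
        have hm0 : 0 ≤ m := by simp only [hm_def]; positivity
        have ha0 : 0 < a := by simp only [ha_def]; positivity
        set K : ℝ := D ^ p * u ^ (-(a * p)) / (2 * (u - v)) with hK_def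
        have huv : (0:ℝ) < u - v := by linarith
        have hK0 : 0 ≤ K := by
          rw [hK_def]
          exact div_nonneg (mul_nonneg (Real.rpow_pos_of_pos hD0 p).le
            (Real.rpow_pos_of_pos hu0 (-(a*p))).le) (by linarith)
        set B : Set (ℝ × ℝ) := {z : ℝ × ℝ | v ≤ z.1 + z.2 ∧ z.1 + z.2 ≤ u ∧
          tstar ≤ z.2 - z.1 ∧ z.2 - z.1 ≤ v} with hB_def
        set f : ℝ × ℝ → ℝ := fun z => z.1 / (2 * r) * ubar z.1 z.2 ^ p with hf_def
        set φ : ℝ × ℝ → ℝ := fun z =>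
          K * ((v - (z.2 - z.1)) * ((z.2 - z.1) - tstar) ^ m) with hφ_def
        have hBcompact : IsCompact B := by
          rw [hB_def, ← cov_image u v tstar]
          exact ((isCompact_Icc.prod isCompact_Icc).image covMap.continuous)
        have hBmeas : MeasurableSet B := hBcompact.isClosed.measurableSet
        have hBsub : B ⊆ {z : ℝ × ℝ | 0 ≤ z.1 ∧ z.1 ≤ z.2 - tstar} := by
          rintro z ⟨h1, h2, h3, h4⟩
          exact ⟨by linarith, by linarith⟩
        have hf_cont : ContinuousOn f B := by
          apply ContinuousOn.mul
          · exact (continuous_fst.div_const _).continuousOn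
          · exact ((hcont.mono hBsub).rpow_const (fun x _ => Or.inr hp0.le))
        have hf_int : IntegrableOn f B := hf_cont.integrableOn_compact hBcompact
        have hφ_cont : ContinuousOn φ B := by
          apply ContinuousOn.mul continuousOn_const
          apply ContinuousOn.mul
          · exact (continuous_const.sub (continuous_snd.sub continuous_fst)).continuousOn
          · exact (((continuous_snd.sub continuous_fst).sub continuous_const).continuousOn.rpow_const
              (fun x _ => Or.inr hm0))
        have hφ_int : IntegrableOn φ B := hφ_cont.integrableOn_compact hBcompact
        -- pointwise bound on B
        have hpoint : ∀ z ∈ B, φ z ≤ f z := by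
          rintro z ⟨h1, h2, h3, h4⟩
          have hz1 : 0 ≤ z.1 := by linarith
          rcases eq_or_lt_of_le hz1 with h0 | h0
          · -- z.1 = 0 forces v - β = 0
            have hβv : z.2 - z.1 = v := by linarith
            have e1 : φ z = 0 := by
              simp only [hφ_def]
              rw [hβv, sub_self, zero_mul, mul_zero]
            have e2 : f z = 0 := by
              simp only [hf_def]
              rw [← h0, zero_div, zero_mul]
            rw [e1, e2]
          · -- apply induction hypothesis at (α, β)
            have hαβ : z.2 - z.1 < z.1 + z.2 := by linarith
            have hIH := ih (z.1 + z.2) (z.2 - z.1) h3 hαβ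
            have he1 : ((z.1 + z.2) - (z.2 - z.1))/2 = z.1 := by ring
            have he2 : ((z.1 + z.2) + (z.2 - z.1))/2 = z.2 := by ring
            rw [he1, he2] at hIH
            set α : ℝ := z.1 + z.2 with hα_def
            set β : ℝ := z.2 - z.1 with hβ_def
            have hα0 : 0 < α := by simp only [hα_def]; linarith
            have hβt : 0 ≤ β - tstar := by linarith
            set Y : ℝ := D * α ^ (-a) * (β - tstar) ^ b with hY_def
            have hY0 : 0 ≤ Y := by
              have := Real.rpow_pos_of_pos hα0 (-a)
              have : (0:ℝ) ≤ (β - tstar) ^ b := Real.rpow_nonneg hβt b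
              simp only [hY_def]
              positivity
            have hYu : Y ≤ ubar z.1 z.2 := hIH
            have hYp : Y ^ p = D ^ p * α ^ (-(a * p)) * (β - tstar) ^ (b * p) := by
              rw [hY_def, Real.mul_rpow (by positivity) (Real.rpow_nonneg hβt b),
                Real.mul_rpow hD0.le (Real.rpow_nonneg hα0.le (-a)),
                ← Real.rpow_mul hα0.le, ← Real.rpow_mul hβt]
              ring_nf
            have hub : ubar z.1 z.2 ^ p ≥ D ^ p * α ^ (-(a * p)) * (β - tstar) ^ (b * p) := by
              rw [← hYp]
              exact Real.rpow_le_rpow hY0 hYu hp0.le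
            have hαu : u ^ (-(a * p)) ≤ α ^ (-(a * p)) :=
              Real.rpow_le_rpow_of_nonpos hα0 h2 (neg_nonpos.mpr (mul_pos ha0 hp0).le)
            have hz1β : (v - β)/2 ≤ z.1 := by
              simp only [hβ_def]; linarith
            have hbpm : (β - tstar) ^ (b * p) = (β - tstar) ^ m := by
              rw [hm_def, hb_def, mul_comm]
            -- assemble
            have hstep1 : φ z ≤ (v - β) / (2 * (u - v)) *
                (D ^ p * α ^ (-(a * p)) * (β - tstar) ^ (b * p)) := by
              have hvβ : 0 ≤ v - β := by simp only [hβ_def]; linarith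
              have e1 : φ z = (v - β) / (2 * (u - v)) *
                  (D ^ p * u ^ (-(a * p)) * (β - tstar) ^ (b * p)) := by
                simp only [hφ_def, hK_def, hbpm]
                ring
              rw [e1]
              have hDp : (0:ℝ) ≤ D ^ p := (Real.rpow_pos_of_pos hD0 p).le
              have hβp : (0:ℝ) ≤ (β - tstar) ^ (b * p) := Real.rpow_nonneg hβt _
              have hden : (0:ℝ) ≤ (v - β) / (2 * (u - v)) := by
                have : (0:ℝ) < u - v := by linarith
                positivity
              gcongr
            have hstep2 : (v - β) / (2 * (u - v)) *
                (D ^ p * α ^ (-(a * p)) * (β - tstar) ^ (b * p))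
                ≤ z.1 / (2 * r) * (D ^ p * α ^ (-(a * p)) * (β - tstar) ^ (b * p)) := by
              have hX : (0:ℝ) ≤ D ^ p * α ^ (-(a * p)) * (β - tstar) ^ (b * p) := by
                have := Real.rpow_pos_of_pos hD0 p
                have := Real.rpow_pos_of_pos hα0 (-(a*p))
                have := Real.rpow_nonneg hβt (b*p)
                positivity
              apply mul_le_mul_of_nonneg_right _ hX
              rw [h2r]
              rw [div_le_div_iff₀ (by linarith) (by linarith)]
              have hprod := mul_le_mul_of_nonneg_right
                (show v - β ≤ 2 * z.1 by linarith) (le_of_lt huv)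
              linarith [hprod]
            calc φ z ≤ (v - β) / (2 * (u - v)) *
                  (D ^ p * α ^ (-(a * p)) * (β - tstar) ^ (b * p)) := hstep1
              _ ≤ z.1 / (2 * r) * (D ^ p * α ^ (-(a * p)) * (β - tstar) ^ (b * p)) := hstep2
              _ ≤ z.1 / (2 * r) * ubar z.1 z.2 ^ p := by
                  apply mul_le_mul_of_nonneg_left hub _
                  positivity
        -- integral comparison
        have hmono : ∫ z in B, φ z ≤ ∫ z in B, f z :=
          setIntegral_mono_on hφ_int hf_int hBmeas hpoint
        have hval : ∫ z in B, φ z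
            = K * ((u - v)/2 * ((v - tstar) ^ (m + 2) / ((m + 1) * (m + 2)))) := by
          rw [hB_def, hφ_def]
          exact phi_integral u v tstar m K hv' hvu hm0
        have hintB : ∫ z in B, f z ≤ ubar r t := by
          have := hint r t hr hrt
          rw [htr1, htr2] at this
          exact this
        -- conclude
        have hfinal : Dseq p C0 (k+1) * u ^ (-((p - 1) * p ^ (k+1))) *
            (v - tstar) ^ (bseq p (k+1))
            = K * ((u - v)/2 * ((v - tstar) ^ (m + 2) / ((m + 1) * (m + 2)))) := by
          have hDsucc : Dseq p C0 (k+1) = D ^ p / (4 * (m + 1) * (m + 2)) := by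
            rw [Dseq_succ, ← hD_def, ← hm_def]
          have hbsucc : bseq p (k+1) = m + 2 := by rw [bseq_succ hp1, hm_def]
          have hasucc : -((p - 1) * p ^ (k+1)) = -(a * p) := by
            rw [ha_def]; ring
          rw [hDsucc, hbsucc, hasucc, hK_def]
          have huv0 : u - v ≠ 0 := by linarith
          have hm1 : m + 1 ≠ 0 := by linarith
          have hm2 : m + 2 ≠ 0 := by linarith
          field_simp
          ring
        rw [hfinal]
        calc K * ((u - v)/2 * ((v - tstar) ^ (m + 2) / ((m + 1) * (m + 2))))
            = ∫ z in B, φ z := hval.symm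
          _ ≤ ∫ z in B, f z := hmono
          _ ≤ ubar r t := hintB
  -- constants for the log estimate
  set C1 : ℝ := 2 * Real.log (4*p/(p-1)) with hC1_def
  set C2 : ℝ := 2 * Real.log p with hC2_def
  set ν0 : ℝ := C2/(p-1) with hν0_def
  set μ0 : ℝ := (C1 + ν0)/(p-1) with hμ0_def
  set A : ℝ := Real.log C0 - μ0 with hA_def
  have hC2pos : 0 < C2 := by
    have := Real.log_pos hp1
    simp only [hC2_def]; linarith
  have hC1pos : 0 < C1 := by
    have : (1:ℝ) < 4*p/(p-1) := by
      rw [lt_div_iff₀ hpm1]; linarith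
    have := Real.log_pos this
    simp only [hC1_def]; linarith
  have hν0pos : 0 < ν0 := by simp only [hν0_def]; positivity
  have hμ0pos : 0 < μ0 := by simp only [hμ0_def]; positivity
  have e1 : ν0 * (p - 1) = C2 := by
    simp only [hν0_def]; field_simp
  have e2 : μ0 * (p - 1) = C1 + ν0 := by
    simp only [hμ0_def]; field_simp
  -- logarithmic lower bound on Dseq
  have hlogD : ∀ k : ℕ, p ^ k * A + (μ0 + ν0 * k) ≤ Real.log (Dseq p C0 k) := by
    intro k
    induction k with
    | zero =>
      simp only [pow_zero, Nat.cast_zero, mul_zero, add_zero, one_mul, hA_def]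
      rw [Dseq_zero]
      linarith
    | succ k ihk =>
      set m : ℝ := p * bseq p k with hm_def
      have hb0 : 0 ≤ bseq p k := bseq_nonneg hp1 k
      have hm0 : 0 ≤ m := by simp only [hm_def]; positivity
      have hD0 : 0 < Dseq p C0 k := Dseq_pos hp1 hC0 k
      have hQ0 : (0:ℝ) < 4 * (m + 1) * (m + 2) :=
        mul_pos (mul_pos (by norm_num) (by linarith)) (by linarith)
      have hlogsucc : Real.log (Dseq p C0 (k+1))
          = p * Real.log (Dseq p C0 k) - Real.log (4 * (m + 1) * (m + 2)) := by
        rw [Dseq_succ, ← hm_def, Real.log_div (ne_of_gt (Real.rpow_pos_of_pos hD0 p)) (ne_of_gt hQ0),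
          Real.log_rpow hD0]
      -- bound on log of the denominator
      have hbk1 : m + 2 = bseq p (k+1) := (bseq_succ hp1 k).symm
      have hble : bseq p (k+1) ≤ 2 * p ^ (k+1) / (p - 1) := by
        unfold bseq
        rw [div_le_div_iff₀ hpm1 hpm1]
        have hprod := mul_le_mul_of_nonneg_right
          (show 2 * (p ^ (k+1) - 1) ≤ 2 * p ^ (k+1) by linarith) hpm1.le
        linarith [hprod]
      have hQle : Real.log (4 * (m + 1) * (m + 2)) ≤ C1 + C2 * k := by
        have h1 : 4 * (m + 1) * (m + 2) ≤ (4 * p / (p-1) * p ^ k) ^ 2 := by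
          have h2 : m + 2 ≤ 2 * p ^ (k+1) / (p-1) := by
            rw [hbk1]; exact hble
          have h3 : 2 * p ^ (k+1) / (p-1) = 2 * p / (p-1) * p ^ k := by
            field_simp; ring
          rw [h3] at h2
          have h4 : (0:ℝ) < 2 * p / (p-1) * p ^ k := by positivity
          have h5 : 4 * p / (p-1) * p ^ k = 2 * (2 * p / (p-1) * p ^ k) := by ring
          rw [h5]
          have hprod := mul_le_mul (show m + 1 ≤ 2 * p / (p-1) * p ^ k by linarith) h2
            (by linarith) h4.le
          linarith [hprod]
        calc Real.log (4 * (m + 1) * (m + 2)) ≤ Real.log ((4 * p / (p-1) * p ^ k) ^ 2) :=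
              Real.log_le_log hQ0 h1
          _ = 2 * Real.log (4 * p / (p-1) * p ^ k) := by
              rw [Real.log_pow]; norm_num
          _ = 2 * (Real.log (4 * p / (p-1)) + k * Real.log p) := by
              rw [Real.log_mul (by positivity) (by positivity), Real.log_pow]
          _ = C1 + C2 * k := by simp only [hC1_def, hC2_def]; ring
      rw [hlogsucc]
      have hstep : p * (p ^ k * A + (μ0 + ν0 * k)) - (C1 + C2 * k)
          = p ^ (k+1) * A + (μ0 + ν0 * (k+1)) + ((k:ℝ) * (ν0 * (p-1) - C2) + (μ0 * (p-1) - (C1 + ν0))) := by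
        push_cast
        ring
      have : p * (p ^ k * A + (μ0 + ν0 * k)) - (C1 + C2 * k)
          = p ^ (k+1) * A + (μ0 + ν0 * (k+1)) := by
        rw [hstep, e1, e2]
        ring
      have hmul : p * (p ^ k * A + (μ0 + ν0 * k)) ≤ p * Real.log (Dseq p C0 k) :=
        mul_le_mul_of_nonneg_left ihk hp0.le
      push_cast
      push_cast at this
      linarith
  -- exponential lower bound
  have hDlow : ∀ k : ℕ, Real.exp (p ^ k * A) ≤ Dseq p C0 k := by
    intro k
    have h1 : p ^ k * A ≤ Real.log (Dseq p C0 k) := by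
      have := hlogD k
      have h2 : 0 ≤ μ0 + ν0 * k := by positivity
      linarith
    calc Real.exp (p ^ k * A) ≤ Real.exp (Real.log (Dseq p C0 k)) := Real.exp_le_exp.mpr h1
      _ = Dseq p C0 k := Real.exp_log (Dseq_pos hp1 hC0 k)
  -- the Strauss condition
  have hsq : (p - 1)^2 < 2 := by
    have h1 : p - 1 < Real.sqrt 2 := by linarith
    have h2 : (0:ℝ) ≤ p - 1 := by linarith
    have h3 : (p-1)*(p-1) < Real.sqrt 2 * Real.sqrt 2 := mul_self_lt_mul_self h2 h1
    rw [Real.mul_self_sqrt (by norm_num : (0:ℝ) ≤ 2)] at h3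
    calc (p-1)^2 = (p-1)*(p-1) := sq (p-1)
      _ < 2 := h3
  set ε : ℝ := 2/(p-1) - (p-1) with hε_def
  have hεpos : 0 < ε := by
    have : p - 1 < 2/(p-1) := by
      rw [lt_div_iff₀ hpm1]
      calc (p-1)*(p-1) = (p-1)^2 := (sq (p-1)).symm
        _ < 2 := hsq
    simp only [hε_def]; linarith
  -- choice of the evaluation point
  set L4 : ℝ := Real.log 4 with hL4_def
  set W : ℝ := max (Real.log (4*tstar)) ((1 + (2/(p-1))*L4 - A)/ε) with hW_def
  set U : ℝ := Real.exp W with hU_def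
  have hUpos : 0 < U := Real.exp_pos W
  have hWU : Real.log U = W := Real.log_exp W
  have hU4t : 4*tstar ≤ U := by
    calc 4*tstar = Real.exp (Real.log (4*tstar)) := (Real.exp_log (by linarith)).symm
      _ ≤ Real.exp W := Real.exp_le_exp.mpr (le_max_left _ _)
  have hWc : 1 + (2/(p-1))*L4 - A ≤ ε * W := by
    have h1 : (1 + (2/(p-1))*L4 - A)/ε ≤ W := le_max_right _ _
    rw [div_le_iff₀ hεpos] at h1
    linarith [h1]
  set M : ℝ := ubar ((U - U/2)/2) ((U + U/2)/2) with hM_def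
  have hM0 : 0 ≤ M := by
    apply hnonneg _ _ (by linarith) (by linarith)
  set R : ℝ := (2/(p-1)) * (W - L4) with hR_def
  -- the master bound : for all k, exp (p^k - R) ≤ M
  have hmaster : ∀ k : ℕ, Real.exp (p ^ k - R) ≤ M := by
    intro k
    have hbk := bseq_nonneg hp1 k
    have hkey := key k U (U/2) (by linarith) (by linarith)
    have hU4 : U/4 ≤ U/2 - tstar := by linarith
    have hU40 : (0:ℝ) ≤ U/4 := by linarith
    have h1 : (U/4) ^ (bseq p k) ≤ (U/2 - tstar) ^ (bseq p k) :=
      Real.rpow_le_rpow hU40 hU4 hbk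
    have hUexp : U ^ (-((p - 1) * p ^ k)) = Real.exp (W * (-((p - 1) * p ^ k))) := by
      rw [Real.rpow_def_of_pos hUpos, hWU]
    have hU4exp : (U/4) ^ (bseq p k) = Real.exp ((W - L4) * bseq p k) := by
      have h4 : U/4 = Real.exp (W - L4) := by
        rw [Real.exp_sub, hL4_def, Real.exp_log (by norm_num : (0:ℝ) < 4)]
      rw [h4, Real.rpow_def_of_pos (Real.exp_pos _), Real.log_exp]
    have hD := hDlow k
    have hchain : Real.exp (p ^ k * A) * Real.exp (W * (-((p - 1) * p ^ k)))
        * Real.exp ((W - L4) * bseq p k) ≤ M := by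
      calc Real.exp (p ^ k * A) * Real.exp (W * (-((p - 1) * p ^ k)))
            * Real.exp ((W - L4) * bseq p k)
          = Real.exp (p ^ k * A) * U ^ (-((p - 1) * p ^ k)) * (U/4) ^ (bseq p k) := by
            rw [hUexp, hU4exp]
        _ ≤ Dseq p C0 k * U ^ (-((p - 1) * p ^ k)) * (U/4) ^ (bseq p k) := by
            apply mul_le_mul_of_nonneg_right _ (Real.rpow_nonneg hU40 _)
            exact mul_le_mul_of_nonneg_right hD (Real.rpow_pos_of_pos hUpos _).le
        _ ≤ Dseq p C0 k * U ^ (-((p - 1) * p ^ k)) * (U/2 - tstar) ^ (bseq p k) := by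
            apply mul_le_mul_of_nonneg_left h1
            exact mul_nonneg (Dseq_pos hp1 hC0 k).le (Real.rpow_pos_of_pos hUpos _).le
        _ ≤ M := hkey
    rw [← Real.exp_add, ← Real.exp_add] at hchain
    refine le_trans (Real.exp_le_exp.mpr ?_) hchain
    -- p^k - R ≤ p^k A + W*(-(p-1)p^k) + (W - L4) * bseq p k
    have hEk : p ^ k * A + W * (-((p - 1) * p ^ k)) + (W - L4) * bseq p k
        = p ^ k * (A + ε * W - (2/(p-1)) * L4) - R := by
      unfold bseq
      simp only [hε_def, hR_def]
      field_simp
      ring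
    rw [hEk]
    have h2 : 1 ≤ A + ε * W - (2/(p-1)) * L4 := by linarith
    have h3 : p ^ k * 1 ≤ p ^ k * (A + ε * W - (2/(p-1)) * L4) :=
      mul_le_mul_of_nonneg_left h2 (pow_pos hp0 k).le
    linarith [h3]
  -- conclusion
  obtain ⟨k, hk⟩ := pow_unbounded_of_one_lt (R + Real.log (M + 1)) hp1
  have h1 : Real.log (M + 1) < p ^ k - R := by linarith
  have h2 : M + 1 < Real.exp (p ^ k - R) := by
    calc M + 1 = Real.exp (Real.log (M + 1)) := (Real.exp_log (by linarith)).symm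
      _ < Real.exp (p ^ k - R) := Real.exp_lt_exp.mpr h1
  linarith [hmaster k]
end
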